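/- arXiv:0812.2621 — 3 statements merged into one kernel-verified Lean document; each statement's English description precedes it below -/
import Mathlib

section
/- Let J be a finite index set with |J| ≥ 2, and let μ be a probability measure on ℝ^J such that for each j ∈ J, the conditional distribution of the j-th coordinate given the others admits a density bounded by a constant c. Suppose Φ : ℝ^J → ℝ is diagonally monotone: Φ is monotone nondecreasing with respect to the coordinatewise partial order, and Φ(x + t·e) ≥ Φ(x) + t for all x and t > 0, with e = (1,…,1). Then for every a ∈ ℝ and ε > 0, μ{x ∈ ℝ^J : Φ(x) ∈ [a, a+ε]} ≤ |J| · c · ε. -/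
open MeasureTheory
open scoped ENNReal

open Filter Topology

namespace Stmt2Aux

noncomputable def tau {J : Type*} (Φ : (J → ℝ) → ℝ) (b : ℝ) (x : J → ℝ) : ℝ :=
  sInf {t : ℝ | b ≤ Φ (x + t • (fun _ => (1:ℝ)))}

variable {J : Type*} {Φ : (J → ℝ) → ℝ} {b : ℝ}

lemma add_smul_one (x : J → ℝ) (s t : ℝ) :
    x + s • (fun _ => (1:ℝ)) + t • (fun _ => (1:ℝ)) = x + (s + t) • (fun _ => (1:ℝ)) := by
  funext i
  simp only [Pi.add_apply, Pi.smul_apply, smul_eq_mul, mul_one]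
  ring

section
variable (hmono : Monotone Φ)
  (hdiag : ∀ (x : J → ℝ) (t : ℝ), 0 < t → Φ x + t ≤ Φ (x + t • (fun _ => (1 : ℝ))))

include hdiag in
lemma S_nonempty (x : J → ℝ) :
    {t : ℝ | b ≤ Φ (x + t • (fun _ => (1:ℝ)))}.Nonempty := by
  refine ⟨max 0 (b - Φ x) + 1, ?_⟩
  have ht : (0:ℝ) < max 0 (b - Φ x) + 1 := by positivity
  have h := hdiag x _ ht
  have h2 := le_max_right 0 (b - Φ x)
  simp only [Set.mem_setOf_eq]
  linarith

include hdiag in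
lemma S_lb (x : J → ℝ) :
    min 0 (b - Φ x) ∈ lowerBounds {t : ℝ | b ≤ Φ (x + t • (fun _ => (1:ℝ)))} := by
  rintro t ht
  by_contra h
  push_neg at h
  have hmin1 := min_le_left (0:ℝ) (b - Φ x)
  have hmin2 := min_le_right (0:ℝ) (b - Φ x)
  have ht0 : t < 0 := lt_of_lt_of_le h hmin1
  have h2 := hdiag (x + t • (fun _ => (1:ℝ))) (-t) (by linarith)
  rw [add_smul_one] at h2
  simp only [add_neg_cancel, zero_smul, add_zero] at h2
  simp only [Set.mem_setOf_eq] at ht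
  linarith

include hdiag in
lemma S_bdd (x : J → ℝ) :
    BddBelow {t : ℝ | b ≤ Φ (x + t • (fun _ => (1:ℝ)))} :=
  ⟨_, S_lb hdiag x⟩

include hdiag in
lemma tau_le {x : J → ℝ} {t : ℝ} (h : b ≤ Φ (x + t • (fun _ => (1:ℝ)))) :
    tau Φ b x ≤ t :=
  csInf_le (S_bdd hdiag x) h

include hdiag in
lemma le_tau {x : J → ℝ} {r : ℝ}
    (h : ∀ t : ℝ, b ≤ Φ (x + t • (fun _ => (1:ℝ))) → r ≤ t) :
    r ≤ tau Φ b x :=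
  le_csInf (S_nonempty hdiag x) h

include hmono hdiag in
lemma tau_anti {x y : J → ℝ} (h : x ≤ y) : tau Φ b y ≤ tau Φ b x := by
  apply csInf_le_csInf (S_bdd hdiag y) (S_nonempty hdiag x)
  intro t ht
  exact le_trans ht (hmono (by intro i; exact add_le_add_left (h i) _))

include hdiag in
lemma tau_shift (x : J → ℝ) (s : ℝ) :
    tau Φ b (x + s • (fun _ => (1:ℝ))) = tau Φ b x - s := by
  have h1 : tau Φ b (x + s • (fun _ => (1:ℝ))) + s ≤ tau Φ b x := by
    refine sub_nonneg.mp ?_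
    have : ∀ u ∈ {t : ℝ | b ≤ Φ (x + t • (fun _ => (1:ℝ)))},
        tau Φ b (x + s • (fun _ => (1:ℝ))) + s ≤ u := by
      intro u hu
      have hmem : b ≤ Φ (x + s • (fun _ => (1:ℝ)) + (u - s) • (fun _ => (1:ℝ))) := by
        rw [add_smul_one]
        simpa [add_sub_cancel] using hu
      have := tau_le hdiag hmem
      linarith
    have h := le_csInf (S_nonempty hdiag x) this
    have : sInf {t : ℝ | b ≤ Φ (x + t • (fun _ => (1:ℝ)))} = tau Φ b x := rfl
    linarith [h.trans_eq this]
  have h2 : tau Φ b x - s ≤ tau Φ b (x + s • (fun _ => (1:ℝ))) := by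
    have : ∀ u ∈ {t : ℝ | b ≤ Φ ((x + s • (fun _ => (1:ℝ))) + t • (fun _ => (1:ℝ)))},
        tau Φ b x - s ≤ u := by
      intro u hu
      rw [Set.mem_setOf_eq, add_smul_one] at hu
      have := tau_le hdiag hu
      linarith
    have h := le_csInf (S_nonempty hdiag (x + s • (fun _ => (1:ℝ)))) this
    have heq : sInf {t : ℝ | b ≤ Φ ((x + s • (fun _ => (1:ℝ))) + t • (fun _ => (1:ℝ)))}
        = tau Φ b (x + s • (fun _ => (1:ℝ))) := rfl
    linarith [h.trans_eq heq]
  linarith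

include hmono hdiag in
lemma tau_continuous [Fintype J] : Continuous (tau Φ b) := by
  have : LipschitzWith 1 (tau Φ b) := by
    apply LipschitzWith.of_dist_le_mul
    intro x y
    rw [NNReal.coe_one, one_mul, Real.dist_eq, abs_sub_le_iff]
    have key : ∀ u v : J → ℝ, tau Φ b u - tau Φ b v ≤ dist u v := by
      intro u v
      have hle : v ≤ u + (dist u v) • (fun _ => (1:ℝ)) := by
        intro i
        have := dist_le_pi_dist u v i
        rw [Real.dist_eq] at this
        have := abs_sub_le_iff.mp this
        simp only [Pi.add_apply, Pi.smul_apply, smul_eq_mul, mul_one]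
        linarith [this.2]
      have := tau_anti (b := b) hmono hdiag hle
      rw [tau_shift hdiag] at this
      linarith
    constructor
    · exact key x y
    · rw [dist_comm]; exact key y x
  exact this.continuous

end

lemma exists_flip (P : ℕ → Prop) (n : ℕ) (h0 : ¬ P 0) (hn : P n) :
    ∃ k < n, ¬ P k ∧ P (k + 1) := by
  induction n with
  | zero => exact absurd hn h0
  | succ m ih =>
    by_cases hm : P m
    · obtain ⟨k, hk, h⟩ := ih hm
      exact ⟨k, Nat.lt_succ_of_lt hk, h⟩
    · exact ⟨m, Nat.lt_succ_self m, hm, hn⟩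

end Stmt2Aux

open Stmt2Aux Filter Topology

/-- Stollmann/Chulaevsky concentration bound. If `μ` is a probability
measure on `ℝ^J` (`|J| ≥ 2`) whose conditional distribution of each coordinate given
the others has a density bounded by `c`, and `Φ` is diagonally monotone, then
`μ {x : Φ x ∈ [a, a+ε]} ≤ |J| · c · ε`. The conditional density hypothesis is phrased
as a disintegration of `μ` along the `j`-th coordinate. -/
theorem stmt_2 {J : Type*} [Fintype J] [DecidableEq J] (hJ : 2 ≤ Fintype.card J)
    (μ : Measure (J → ℝ)) [IsProbabilityMeasure μ] (c : ℝ) (hc : 0 ≤ c)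
    (hcond : ∀ j : J, ∃ (ν : Measure ({i : J // i ≠ j} → ℝ))
      (κ : ({i : J // i ≠ j} → ℝ) → Measure ℝ),
      IsProbabilityMeasure ν ∧
      (∀ y, ∃ p : ℝ → ℝ, Measurable p ∧ (∀ r, 0 ≤ p r ∧ p r ≤ c) ∧
        κ y = volume.withDensity (fun r => ENNReal.ofReal (p r))) ∧
      (∀ A : Set (J → ℝ), MeasurableSet A →
        μ A = ∫⁻ y, κ y {r : ℝ |
          (fun i => if h : i = j then r else y ⟨i, h⟩) ∈ A} ∂ν))
    (Φ : (J → ℝ) → ℝ) (hmono : Monotone Φ)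
    (hdiag : ∀ (x : J → ℝ) (t : ℝ), 0 < t →
      Φ x + t ≤ Φ (x + t • (fun _ => (1 : ℝ))))
    (a ε : ℝ) (hε : 0 < ε) :
    μ {x : J → ℝ | Φ x ∈ Set.Icc a (a + ε)}
      ≤ (Fintype.card J : ℝ≥0∞) * ENNReal.ofReal (c * ε) := by
  classical
  set n := Fintype.card J with hn
  set σ := Fintype.equivFin J with hσ
  set τ := tau Φ (a + ε) with hτdef
  have τanti : ∀ {x y : J → ℝ}, x ≤ y → τ y ≤ τ x := fun h => tau_anti hmono hdiag h
  have τcont : Continuous τ := tau_continuous hmono hdiag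
  -- Step 1: bound for every t > ε
  have key : ∀ t : ℝ, ε < t → μ {x : J → ℝ | Φ x ∈ Set.Icc a (a + ε)}
      ≤ (n : ℝ≥0∞) * ENNReal.ofReal (c * t) := by
    intro t ht
    have ht0 : 0 < t := hε.trans ht
    set v : ℕ → J → ℝ := fun k i => if (σ i : ℕ) < k then t else 0 with hv
    set B : ℕ → Set (J → ℝ) :=
      fun k => {x | τ (x + v (k + 1)) < 0 ∧ 0 ≤ τ (x + v k)} with hB
    have hBmeas : ∀ k, MeasurableSet (B k) := by
      intro k
      have h1 : Continuous fun x : J → ℝ => τ (x + v (k + 1)) :=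
        τcont.comp (continuous_id.add continuous_const)
      have h2 : Continuous fun x : J → ℝ => τ (x + v k) :=
        τcont.comp (continuous_id.add continuous_const)
      exact (measurableSet_lt (h1.measurable) measurable_const).inter
        (measurableSet_le measurable_const (h2.measurable))
    -- covering
    have cover : {x : J → ℝ | Φ x ∈ Set.Icc a (a + ε)} ⊆ ⋃ k ∈ Finset.range n, B k := by
      intro x hx
      obtain ⟨hxa, hxb⟩ := hx
      have hτle : τ x ≤ ε := by
        apply tau_le hdiag
        have := hdiag x ε hε
        linarith
      have hτge : 0 ≤ τ x := by
        apply le_tau hdiag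
        intro s hs
        by_contra hneg
        push_neg at hneg
        have h2 := hdiag (x + s • (fun _ => (1:ℝ))) (-s) (by linarith)
        rw [add_smul_one] at h2
        simp only [add_neg_cancel, zero_smul, add_zero] at h2
        linarith
      have hP0 : ¬ (τ (x + v 0) < 0) := by
        have : v 0 = 0 := by funext i; simp [hv]
        rw [this, add_zero]
        linarith
      have hPn : τ (x + v n) < 0 := by
        have hvn : v n = t • (fun _ => (1:ℝ)) := by
          funext i
          simp [hv, (σ i).isLt]
          exact fun h => absurd h (not_le.mpr (σ i).isLt)
        rw [hvn, hτdef, tau_shift hdiag]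
        rw [hτdef] at hτle
        linarith
      obtain ⟨k, hkn, hk1, hk2⟩ := exists_flip (fun k => τ (x + v k) < 0) n hP0 hPn
      refine Set.mem_biUnion (Finset.mem_range.mpr hkn) ?_
      exact ⟨hk2, le_of_not_gt hk1⟩
    -- measure of each B k
    have bound : ∀ k, k < n → μ (B k) ≤ ENNReal.ofReal (c * t) := by
      intro k hkn
      set j : J := σ.symm ⟨k, hkn⟩ with hj
      have hσj : (σ j : ℕ) = k := by simp [hj]
      obtain ⟨ν, κ, hνprob, hκdens, hdis⟩ := hcond j
      rw [hdis (B k) (hBmeas k)]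
      have sec : ∀ y, κ y {r : ℝ |
          (fun i => if h : i = j then r else y ⟨i, h⟩) ∈ B k} ≤ ENNReal.ofReal (c * t) := by
        intro y
        set g : ℝ → (J → ℝ) := fun r i => if h : i = j then r else y ⟨i, h⟩ with hg
        set S : Set ℝ := {r | g r ∈ B k} with hS
        rcases S.eq_empty_or_nonempty with hemp | ⟨r₀, hr₀⟩
        · rw [hemp]; simp
        · -- diameter bound
          have diam : ∀ r ∈ S, ∀ r' ∈ S, r' < r + t := by
            intro r hr r' hr'
            by_contra hcon
            push_neg at hcon
            have hgj : ∀ r : ℝ, g r j = r := fun r => by simp [hg]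
            have hgi : ∀ (r : ℝ) (i : J) (hij : i ≠ j), g r i = y ⟨i, hij⟩ :=
              fun r i hij => by simp [hg, hij]
            have hvk1j : v (k + 1) j = t := by simp [hv, hσj]
            have hvkj : v k j = 0 := by simp [hv, hσj]
            have hle : g r + v (k + 1) ≤ g r' + v k := by
              intro i
              by_cases hij : i = j
              · subst hij
                simp only [Pi.add_apply, hgj, hvk1j, hvkj]
                linarith
              · simp only [Pi.add_apply, hgi _ _ hij]
                have hne : (σ i : ℕ) ≠ k := by
                  intro hcontra
                  apply hij
                  have h5 : σ i = ⟨k, hkn⟩ := Fin.ext hcontra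
                  rw [hj, ← h5, Equiv.symm_apply_apply]
                have hiff : ((σ i : ℕ) < k + 1) = ((σ i : ℕ) < k) := by
                  simp only [eq_iff_iff, Nat.lt_succ_iff]
                  exact ⟨fun h => lt_of_le_of_ne h hne, fun h => le_of_lt h⟩
                simp only [hv, hiff, le_refl]
            have h1 := τanti hle
            have h2 : τ (g r + v (k + 1)) < 0 := hr.1
            have h3 : 0 ≤ τ (g r' + v k) := hr'.2
            linarith
          have hbdd : BddBelow S := ⟨r₀ - t, fun r hr => by
            have := diam r hr r₀ hr₀; linarith⟩
          have hsub : S ⊆ Set.Icc (sInf S) (sInf S + t) := by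
            intro r hr
            constructor
            · exact csInf_le hbdd hr
            · have hlow : r - t ≤ sInf S := by
                apply le_csInf ⟨r₀, hr₀⟩
                intro r' hr'
                have := diam r' hr' r hr
                linarith
              linarith
          obtain ⟨p, hpmeas, hpb, hκeq⟩ := hκdens y
          calc κ y S ≤ κ y (Set.Icc (sInf S) (sInf S + t)) := measure_mono hsub
            _ = ∫⁻ r in Set.Icc (sInf S) (sInf S + t), ENNReal.ofReal (p r) := by
                rw [hκeq, withDensity_apply _ measurableSet_Icc]
            _ ≤ ∫⁻ _ in Set.Icc (sInf S) (sInf S + t), ENNReal.ofReal c :=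
                lintegral_mono fun r => ENNReal.ofReal_le_ofReal (hpb r).2
            _ = ENNReal.ofReal c * volume (Set.Icc (sInf S) (sInf S + t)) := by
                rw [setLIntegral_const]
            _ = ENNReal.ofReal (c * t) := by
                rw [Real.volume_Icc, add_sub_cancel_left, ← ENNReal.ofReal_mul hc]
      calc (∫⁻ y, κ y {r : ℝ |
            (fun i => if h : i = j then r else y ⟨i, h⟩) ∈ B k} ∂ν)
          ≤ ∫⁻ _, ENNReal.ofReal (c * t) ∂ν := lintegral_mono sec
        _ = ENNReal.ofReal (c * t) := by simp [lintegral_const, measure_univ]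
    calc μ {x : J → ℝ | Φ x ∈ Set.Icc a (a + ε)}
        ≤ μ (⋃ k ∈ Finset.range n, B k) := measure_mono cover
      _ ≤ ∑ k ∈ Finset.range n, μ (B k) := measure_biUnion_finset_le _ _
      _ ≤ ∑ k ∈ Finset.range n, ENNReal.ofReal (c * t) :=
          Finset.sum_le_sum fun k hk => bound k (Finset.mem_range.mp hk)
      _ = (n : ℝ≥0∞) * ENNReal.ofReal (c * t) := by
          rw [Finset.sum_const, Finset.card_range, nsmul_eq_mul]
  -- Step 2: take the limit t → ε⁺
  have htend : Filter.Tendsto (fun t : ℝ => (n : ℝ≥0∞) * ENNReal.ofReal (c * t))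
      (𝓝[>] ε) (𝓝 ((n : ℝ≥0∞) * ENNReal.ofReal (c * ε))) := by
    apply Filter.Tendsto.mono_left ?_ nhdsWithin_le_nhds
    exact ENNReal.Tendsto.const_mul
      ((ENNReal.continuous_ofReal.tendsto (c * ε)).comp
        ((continuous_const.mul continuous_id).tendsto ε))
      (Or.inr (ENNReal.natCast_ne_top n))
  refine ge_of_tendsto htend ?_
  filter_upwards [self_mem_nhdsWithin] with t ht
  exact key t ht
end

section
/- Let J be a finite set and let μ = ⨂_{j∈J} μ_j be a product probability measure on ℝ^J, where each μ_j has a density on ℝ bounded by c. Let Φ : ℝ^J → ℝ be monotone nondecreasing in the coordinatewise order and satisfy Φ(x + t·e) ≥ Φ(x) + t for all x ∈ ℝ^J, t > 0 (e = (1,…,1)). Then for every a ∈ ℝ and ε > 0, μ{x : a ≤ Φ(x) ≤ a + ε} ≤ |J| · c · ε. -/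
open MeasureTheory Set
open scoped ENNReal

/-- Auxiliary: measure bound for a set of reals of one-sided diameter at most `s`,
under a measure with density bounded by `c`. -/
lemma aux_line_bound {c s : ℝ} (ν : Measure ℝ) (p : ℝ → ℝ)
    (hpb : ∀ r, 0 ≤ p r ∧ p r ≤ c)
    (hν : ν = volume.withDensity fun r => ENNReal.ofReal (p r))
    (T : Set ℝ) (hT : ∀ r1 ∈ T, ∀ r2 ∈ T, r2 - r1 < s) :
    ν T ≤ ENNReal.ofReal c * ENNReal.ofReal s := by
  rcases T.eq_empty_or_nonempty with h | ⟨t0, ht0⟩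
  · simp [h]
  · have hbdd : BddBelow T := ⟨t0 - s, fun t ht => by have := hT t ht t0 ht0; linarith⟩
    have hsub : T ⊆ Icc (sInf T) (sInf T + s) := by
      intro t ht
      refine ⟨csInf_le hbdd ht, ?_⟩
      have h2 : t - s ≤ sInf T :=
        le_csInf ⟨t0, ht0⟩ (fun t1 ht1 => by have := hT t1 ht1 t ht; linarith)
      linarith
    calc ν T ≤ ν (Icc (sInf T) (sInf T + s)) := measure_mono hsub
    _ ≤ ENNReal.ofReal c * ENNReal.ofReal s := by
        rw [hν, withDensity_apply _ measurableSet_Icc]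
        calc ∫⁻ r in Icc (sInf T) (sInf T + s), ENNReal.ofReal (p r)
            ≤ ∫⁻ _ in Icc (sInf T) (sInf T + s), ENNReal.ofReal c :=
              lintegral_mono fun r => ENNReal.ofReal_le_ofReal (hpb r).2
        _ = ENNReal.ofReal c * volume (Icc (sInf T) (sInf T + s)) := by
              rw [setLIntegral_const]
        _ = ENNReal.ofReal c * ENNReal.ofReal s := by
              rw [Real.volume_Icc]; congr 1; ring

/-- Auxiliary Fubini bound: if any two points of `S` agreeing off coordinate `j`
have `j`-coordinates within `s`, then `(Measure.pi μj) S ≤ c * s`. -/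
lemma aux_key_bound {J : Type*} [Fintype J] (c : ℝ) (μj : J → Measure ℝ)
    [∀ j, IsProbabilityMeasure (μj j)]
    (hdens : ∀ j, ∃ p : ℝ → ℝ, Measurable p ∧ (∀ r, 0 ≤ p r ∧ p r ≤ c) ∧
      μj j = volume.withDensity (fun r => ENNReal.ofReal (p r)))
    (S : Set (J → ℝ)) (hS : MeasurableSet S) (j : J) (s : ℝ)
    (hpair : ∀ x1 ∈ S, ∀ x2 ∈ S, (∀ i, i ≠ j → x1 i = x2 i) → x2 j - x1 j < s) :
    Measure.pi μj S ≤ ENNReal.ofReal c * ENNReal.ofReal s := by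
  classical
  set p : J → Prop := fun i => i ≠ j with hp
  haveI huniq : Unique {i // ¬ p i} :=
    ⟨⟨⟨j, by simp [hp]⟩⟩, by rintro ⟨i, hi⟩; simp only [hp, not_not] at hi; subst hi; rfl⟩
  set e := MeasurableEquiv.piEquivPiSubtypeProd (π := fun _ : J => ℝ) p with he
  have mp := measurePreserving_piEquivPiSubtypeProd μj p
  set t : Set ((∀ i : Subtype p, ℝ) × (∀ i : {i // ¬ p i}, ℝ)) := ⇑e.symm ⁻¹' S with hts
  have ht : MeasurableSet t := hS.preimage e.symm.measurable
  have hμS : Measure.pi μj S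
      = ((Measure.pi fun i : Subtype p => μj i).prod
          (Measure.pi fun i : {i // ¬ p i} => μj i)) t := by
    rw [← mp.map_eq, MeasurableEquiv.map_apply]
    show Measure.pi μj S = Measure.pi μj (⇑e ⁻¹' t)
    rw [hts, ← Set.preimage_comp]
    simp
  rw [hμS, Measure.prod_apply ht]
  have key : ∀ y : (∀ i : Subtype p, ℝ),
      (Measure.pi fun i : {i // ¬ p i} => μj i) (Prod.mk y ⁻¹' t)
        ≤ ENNReal.ofReal c * ENNReal.ofReal s := by
    intro y
    set uq := MeasurableEquiv.piUnique (fun _ : {i // ¬ p i} => ℝ) with huq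
    have mpu := measurePreserving_piUnique (fun i : {i // ¬ p i} => μj i)
    set U : Set ℝ := {r : ℝ | (y, uq.symm r) ∈ t} with hU
    have hA : Prod.mk y ⁻¹' t = ⇑uq ⁻¹' U := by
      ext z
      have : uq.symm (uq z) = z := uq.symm_apply_apply z
      simp only [mem_preimage, hU, mem_setOf_eq, this]
    have hUm : MeasurableSet U :=
      (ht.preimage (measurable_const.prodMk uq.symm.measurable))
    have hXj : ∀ r : ℝ, (e.symm (y, uq.symm r)) j = r := by
      intro r
      simp [he, MeasurableEquiv.piEquivPiSubtypeProd, Equiv.piEquivPiSubtypeProd, hp,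
        huq, MeasurableEquiv.piUnique, Equiv.piUnique]
    have hXi : ∀ (r : ℝ) (i : J) (h : p i), (e.symm (y, uq.symm r)) i = y ⟨i, h⟩ := by
      intro r i h
      simp [he, MeasurableEquiv.piEquivPiSubtypeProd, Equiv.piEquivPiSubtypeProd, h]
    have hline : ∀ r1 ∈ U, ∀ r2 ∈ U, r2 - r1 < s := by
      intro r1 hr1 r2 hr2
      have h1 : e.symm (y, uq.symm r1) ∈ S := hr1
      have h2 : e.symm (y, uq.symm r2) ∈ S := hr2
      have := hpair _ h1 _ h2 (fun i hi => by rw [hXi r1 i hi, hXi r2 i hi])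
      rwa [hXj r1, hXj r2] at this
    obtain ⟨q, hqm, hqb, hqd⟩ := hdens j
    have hmeas : (Measure.pi fun i : {i // ¬ p i} => μj i) (Prod.mk y ⁻¹' t) = μj j U := by
      have hd : ((default : {i // ¬ p i}) : J) = j := by
        have h2 := (default : {i // ¬ p i}).property
        simpa [hp] using h2
      rw [hA, mpu.measure_preimage hUm.nullMeasurableSet, hd]
    rw [hmeas]
    exact aux_line_bound (μj j) q hqb hqd U hline
  calc ∫⁻ y, (Measure.pi fun i : {i // ¬ p i} => μj i) (Prod.mk y ⁻¹' t)
        ∂(Measure.pi fun i : Subtype p => μj i)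
      ≤ ∫⁻ _, ENNReal.ofReal c * ENNReal.ofReal s ∂(Measure.pi fun i : Subtype p => μj i) :=
        lintegral_mono key
    _ = ENNReal.ofReal c * ENNReal.ofReal s := by simp

/-- concentration bound for a product measure `μ = ⨂_j μ_j` on `ℝ^J`
where each factor has a Lebesgue density bounded by `c`, and a diagonally monotone
function `Φ`: `μ {x : a ≤ Φ x ≤ a + ε} ≤ |J| · c · ε`. -/
theorem stmt_3 {J : Type*} [Fintype J] [Nonempty J] (c : ℝ) (hc : 0 < c)
    (μj : J → Measure ℝ) [∀ j, IsProbabilityMeasure (μj j)]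
    (hdens : ∀ j, ∃ p : ℝ → ℝ, Measurable p ∧ (∀ r, 0 ≤ p r ∧ p r ≤ c) ∧
      μj j = volume.withDensity (fun r => ENNReal.ofReal (p r)))
    (Φ : (J → ℝ) → ℝ) (hmono : Monotone Φ)
    (hdiag : ∀ (x : J → ℝ) (t : ℝ), 0 < t →
      Φ x + t ≤ Φ (x + t • (fun _ => (1 : ℝ))))
    (a ε : ℝ) (hε : 0 < ε) :
    Measure.pi μj {x : J → ℝ | a ≤ Φ x ∧ Φ x ≤ a + ε}
      ≤ (Fintype.card J : ℝ≥0∞) * ENNReal.ofReal (c * ε) := by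
  classical
  set n := Fintype.card J with hn'
  have hn : 0 < n := Fintype.card_pos
  set eqv : J ≃ Fin n := Fintype.equivFin J with heqv
  set A := {x : J → ℝ | a ≤ Φ x ∧ Φ x ≤ a + ε} with hA
  set D := closure {x : J → ℝ | a ≤ Φ x} with hD
  have hDm : MeasurableSet D := isClosed_closure.measurableSet
  -- D is an upper set
  have hDup : ∀ x ∈ D, ∀ y, x ≤ y → y ∈ D := by
    intro x hx y hxy
    have himg : (fun z : J → ℝ => z + (y - x)) '' {x : J → ℝ | a ≤ Φ x}
        ⊆ {x : J → ℝ | a ≤ Φ x} := by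
      rintro _ ⟨z, hz, rfl⟩
      refine le_trans hz (hmono ?_)
      intro i
      have := hxy i
      simp only [Pi.add_apply, Pi.sub_apply, le_add_iff_nonneg_right]
      linarith
    have hcont : Continuous fun z : J → ℝ => z + (y - x) := continuous_id.add continuous_const
    have h1 : y ∈ (fun z : J → ℝ => z + (y - x)) '' D :=
      ⟨x, hx, by funext i; simp only [Pi.add_apply, Pi.sub_apply]; ring⟩
    have h2 := image_closure_subset_closure_image hcont h1
    exact closure_mono himg h2
  -- main bound, for every s > ε
  have main : ∀ s : ℝ, ε < s →
      Measure.pi μj A ≤ (n : ℝ≥0∞) * (ENNReal.ofReal c * ENNReal.ofReal s) := by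
    intro s hεs
    have hs : 0 < s := lt_trans hε hεs
    set w : Fin (n+1) → (J → ℝ) := fun k j => if (eqv j : ℕ) < (k : ℕ) then s else 0 with hw
    set E : Fin (n+1) → Set (J → ℝ) := fun k => {x | x - w k ∈ D} with hE
    have hEm : ∀ k, MeasurableSet (E k) := by
      intro k
      have hmeas : Measurable fun x : J → ℝ => x - w k :=
        measurable_pi_lambda _ fun i => (measurable_pi_apply i).sub measurable_const
      exact hDm.preimage hmeas
    have hE0 : ∀ x ∈ A, x ∈ E 0 := by
      intro x hx
      have : x - w 0 = x := by
        funext i; simp [hw]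
      rw [hE]
      simp only [mem_setOf_eq, this]
      exact subset_closure hx.1
    have hlast : ∀ x ∈ A, x ∉ E (Fin.last n) := by
      intro x hx hmem
      have hwl : ∀ i, w (Fin.last n) i = s := by
        intro i; simp [hw, Fin.is_lt]
      set δ := (s - ε)/2 with hδ
      have hδpos : 0 < δ := by simp only [hδ]; linarith
      obtain ⟨y, hy, hdist⟩ := Metric.mem_closure_iff.mp hmem δ hδpos
      have hycoord : ∀ i, y i + (s - δ) ≤ x i := by
        intro i
        have h1 : dist ((x - w (Fin.last n)) i) (y i) < δ :=
          lt_of_le_of_lt (dist_le_pi_dist _ _ i) hdist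
        rw [Real.dist_eq] at h1
        have h2 := abs_lt.mp h1
        have h3 : (x - w (Fin.last n)) i = x i - s := by simp [hwl i]
        rw [h3] at h2
        have := h2.1
        linarith
    -- y + (s - δ) • 1 ≤ x
      have hle : y + (s - δ) • (fun _ => (1:ℝ)) ≤ x := by
        intro i
        have := hycoord i
        simpa using this
      have h4 := hdiag y (s - δ) (by simp only [hδ]; linarith)
      have h5 : Φ (y + (s - δ) • (fun _ => (1:ℝ))) ≤ Φ x := hmono hle
      have h6 : a ≤ Φ y := hy
      have h7 : Φ x ≤ a + ε := hx.2
      have : s - δ ≤ ε := by linarith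
      simp only [hδ] at this
      linarith
    have hchain : A ⊆ ⋃ k : Fin n, (E k.castSucc \ E k.succ) := by
      intro x hx
      by_contra hcon
      simp only [mem_iUnion, not_exists, mem_diff, not_and, not_not] at hcon
      have hall : ∀ m : Fin (n+1), x ∈ E m := by
        intro m
        induction m using Fin.induction with
        | zero => exact hE0 x hx
        | succ k ih => exact hcon k ih
      exact hlast x hx (hall (Fin.last n))
    have piece : ∀ k : Fin n, Measure.pi μj (E k.castSucc \ E k.succ)
        ≤ ENNReal.ofReal c * ENNReal.ofReal s := by
      intro k
      set j := eqv.symm k with hj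
      refine aux_key_bound c μj hdens _ ((hEm _).diff (hEm _)) j s ?_
      intro x1 hx1 x2 hx2 hagree
      by_contra hge
      push_neg at hge
      apply hx2.2
      rw [hE]
      simp only [mem_setOf_eq]
      refine hDup _ hx1.1 _ ?_
      intro i
      simp only [Pi.sub_apply]
      by_cases hij : i = j
      · have hk : (eqv i : ℕ) = (k : ℕ) := by rw [hij, hj]; simp
        have hw1 : w k.castSucc i = 0 := by
          simp only [hw, Fin.coe_castSucc, hk]
          simp
        have hw2 : w k.succ i = s := by
          simp only [hw, Fin.val_succ, hk]
          simp
        rw [hw1, hw2]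
        have hgei : s ≤ x2 i - x1 i := by rw [hij]; exact hge
        linarith
      · have hk : (eqv i : ℕ) ≠ (k : ℕ) := by
          intro hcontra
          apply hij
          have : eqv i = k := Fin.ext hcontra
          rw [hj, ← this]
          simp
        have hww : w k.castSucc i = w k.succ i := by
          simp only [hw, Fin.coe_castSucc, Fin.val_succ]
          have : (eqv i : ℕ) < (k : ℕ) ↔ (eqv i : ℕ) < (k : ℕ) + 1 := by
            constructor
            · intro h; omega
            · intro h; omega
          rcases Nat.lt_or_ge (eqv i : ℕ) (k : ℕ) with h | h
          · rw [if_pos h, if_pos (by omega)]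
          · rw [if_neg (by omega), if_neg (by omega)]
        rw [hagree i hij, hww]
    calc Measure.pi μj A ≤ Measure.pi μj (⋃ k : Fin n, (E k.castSucc \ E k.succ)) :=
          measure_mono hchain
    _ ≤ ∑' k : Fin n, Measure.pi μj (E k.castSucc \ E k.succ) := measure_iUnion_le _
    _ = ∑ k : Fin n, Measure.pi μj (E k.castSucc \ E k.succ) := tsum_fintype _
    _ ≤ ∑ _k : Fin n, (ENNReal.ofReal c * ENNReal.ofReal s) :=
          Finset.sum_le_sum fun k _ => piece k
    _ = (n : ℝ≥0∞) * (ENNReal.ofReal c * ENNReal.ofReal s) := by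
          rw [Finset.sum_const, Finset.card_univ, Fintype.card_fin, nsmul_eq_mul]
  -- take the limit s → ε⁺
  have hmain2 : ∀ δ : ℝ, 0 < δ →
      Measure.pi μj A ≤ (n : ℝ≥0∞) * ENNReal.ofReal (c * ε) + ENNReal.ofReal (n * c * δ) := by
    intro δ hδ
    have h1 := main (ε + δ) (by linarith)
    calc Measure.pi μj A
        ≤ (n : ℝ≥0∞) * (ENNReal.ofReal c * ENNReal.ofReal (ε + δ)) := h1
    _ = (n : ℝ≥0∞) * ENNReal.ofReal (c * ε) + ENNReal.ofReal (n * c * δ) := by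
        rw [← ENNReal.ofReal_mul hc.le, mul_add c,
          ENNReal.ofReal_add (by positivity) (by positivity), mul_add]
        congr 1
        rw [← ENNReal.ofReal_natCast n, ← ENNReal.ofReal_mul (by positivity)]
        congr 1
        ring
  refine ENNReal.le_of_forall_pos_le_add fun η hη _ => ?_
  have hnc : (0:ℝ) < (n : ℝ) * c := by positivity
  have hη' : (0:ℝ) < (η : ℝ) := by exact_mod_cast hη
  have h2 := hmain2 ((η : ℝ) / ((n : ℝ) * c)) (div_pos hη' hnc)
  calc Measure.pi μj A
      ≤ (n : ℝ≥0∞) * ENNReal.ofReal (c * ε)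
        + ENNReal.ofReal ((n : ℝ) * c * ((η : ℝ) / ((n : ℝ) * c))) := h2
  _ = (n : ℝ≥0∞) * ENNReal.ofReal (c * ε) + (η : ℝ≥0∞) := by
      congr 1
      rw [show (n : ℝ) * c * ((η : ℝ) / ((n : ℝ) * c)) = (η : ℝ) by field_simp]
      exact ENNReal.ofReal_coe_nnreal
end

section
/- In ℝ^d × ℝ^d with the sup-norm ‖·‖_max on ℝ^{2d}, let u = (u₁,u₂) and u' = (u₁',u₂') be two points, let L₁,L₂,L₁',L₂' > 1 and R > 0, and suppose min{‖u − u'‖_max, ‖S(u) − u'‖_max} > 8·max{L₁+R, L₂+R, L₁'+R, L₂'+R}, where S(u) = (u₂,u₁). Define the enlarged boxes Λ̂ = Λ_{L₁+R}(u₁) × Λ_{L₂+R}(u₂) and Λ̂' = Λ_{L₁'+R}(u₁') × Λ_{L₂'+R}(u₂'), where Λ_L(v) = ∏_{i=1}^d [v^{(i)} − L, v^{(i)} + L]. Write Π₁, Π₂ for the projections onto the first and second factor ℝ^d, and ΠΛ̂ = Π₁Λ̂ ∪ Π₂Λ̂. Then at least one of the following five statements holds: (A) Π₁Λ̂ ∩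 (Π₂Λ̂ ∪ ΠΛ̂') = ∅; (B) Π₂Λ̂ ∩ (Π₁Λ̂ ∪ ΠΛ̂') = ∅; (C) Π₁Λ̂' ∩ (ΠΛ̂ ∪ Π₂Λ̂') = ∅; (D) Π₂Λ̂' ∩ (ΠΛ̂ ∪ Π₁Λ̂') = ∅; (E) ΠΛ̂ ∩ ΠΛ̂' = ∅. -/
/-- The closed cube of half-side `L` centered at `v` in `ℝ^d` (sup-norm ball). -/
def cube {d : ℕ} (L : ℝ) (v : Fin d → ℝ) : Set (Fin d → ℝ) :=
  {x : Fin d → ℝ | ‖x - v‖ ≤ L}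

lemma cube_disj {d : ℕ} {a b : ℝ} {v w : Fin d → ℝ} (h : a + b < ‖v - w‖) :
    cube a v ∩ cube b w = ∅ := by
  rw [Set.eq_empty_iff_forall_notMem]
  rintro x ⟨hx1, hx2⟩
  simp only [cube, Set.mem_setOf_eq] at hx1 hx2
  have h1 := dist_triangle v x w
  rw [dist_eq_norm, dist_eq_norm, dist_eq_norm, norm_sub_rev v x] at h1
  linarith

lemma tri {d : ℕ} (x y z : Fin d → ℝ) : ‖x - z‖ ≤ ‖x - y‖ + ‖y - z‖ := by
  have h1 := dist_triangle x y z
  rwa [dist_eq_norm, dist_eq_norm, dist_eq_norm] at h1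

/-- geometric separation lemma for sufficiently distant two-particle
boxes. If `min(‖u−u'‖_max, ‖S(u)−u'‖_max) > 8·max(L₁+R, L₂+R, L₁'+R, L₂'+R)`, then
with `Λ̂ = Λ_{L₁+R}(u₁) × Λ_{L₂+R}(u₂)` and `Λ̂' = Λ_{L₁'+R}(u₁') × Λ_{L₂'+R}(u₂')`
(whose factors are the projections `Π₁, Π₂`), at least one of the five
disjointness alternatives (A)–(E) holds. -/
theorem stmt_5 {d : ℕ} (u₁ u₂ u₁' u₂' : Fin d → ℝ) (L₁ L₂ L₁' L₂' R : ℝ)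
    (hL₁ : 1 < L₁) (hL₂ : 1 < L₂) (hL₁' : 1 < L₁') (hL₂' : 1 < L₂') (hR : 0 < R)
    (hdist : 8 * max (max (L₁ + R) (L₂ + R)) (max (L₁' + R) (L₂' + R)) <
      min (max ‖u₁ - u₁'‖ ‖u₂ - u₂'‖) (max ‖u₂ - u₁'‖ ‖u₁ - u₂'‖)) :
    -- (A)
    (cube (L₁ + R) u₁ ∩ (cube (L₂ + R) u₂ ∪
        (cube (L₁' + R) u₁' ∪ cube (L₂' + R) u₂')) = ∅) ∨
    -- (B)
    (cube (L₂ + R) u₂ ∩ (cube (L₁ + R) u₁ ∪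
        (cube (L₁' + R) u₁' ∪ cube (L₂' + R) u₂')) = ∅) ∨
    -- (C)
    (cube (L₁' + R) u₁' ∩ ((cube (L₁ + R) u₁ ∪ cube (L₂ + R) u₂) ∪
        cube (L₂' + R) u₂') = ∅) ∨
    -- (D)
    (cube (L₂' + R) u₂' ∩ ((cube (L₁ + R) u₁ ∪ cube (L₂ + R) u₂) ∪
        cube (L₁' + R) u₁') = ∅) ∨
    -- (E)
    ((cube (L₁ + R) u₁ ∪ cube (L₂ + R) u₂) ∩
        (cube (L₁' + R) u₁' ∪ cube (L₂' + R) u₂') = ∅) := by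
  set a := L₁ + R with ha
  set b := L₂ + R with hb
  set c := L₁' + R with hc
  set e := L₂' + R with he
  set M := max (max a b) (max c e) with hM
  have haM : a ≤ M := le_trans (le_max_left _ _) (le_max_left _ _)
  have hbM : b ≤ M := le_trans (le_max_right _ _) (le_max_left _ _)
  have hcM : c ≤ M := le_trans (le_max_left _ _) (le_max_right _ _)
  have heM : e ≤ M := le_trans (le_max_right _ _) (le_max_right _ _)
  have hMpos : 0 < M := lt_of_lt_of_le (by linarith) haM
  set d1 := ‖u₁ - u₁'‖ with hd1
  set d2 := ‖u₂ - u₂'‖ with hd2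
  set d3 := ‖u₂ - u₁'‖ with hd3
  set d4 := ‖u₁ - u₂'‖ with hd4
  set p := ‖u₁ - u₂‖ with hp
  set q := ‖u₁' - u₂'‖ with hq
  have h1 : 8 * M < max d1 d2 := lt_of_lt_of_le hdist (min_le_left _ _)
  have h2 : 8 * M < max d3 d4 := lt_of_lt_of_le hdist (min_le_right _ _)
  -- triangle inequalities
  have t1 : d2 ≤ d3 + q := tri u₂ u₁' u₂'
  have t2 : d1 ≤ d4 + q := by
    have := tri u₁ u₂' u₁'
    rwa [norm_sub_rev u₂' u₁'] at this
  have t3 : d3 ≤ p + d1 := by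
    have := tri u₂ u₁ u₁'
    rwa [norm_sub_rev u₂ u₁] at this
  have t4 : d4 ≤ p + d2 := tri u₁ u₂ u₂'
  have t5 : d2 ≤ p + d4 := by
    have := tri u₂ u₁ u₂'
    rwa [norm_sub_rev u₂ u₁] at this
  have t6 : d1 ≤ p + d3 := tri u₁ u₂ u₁'
  have key : (a + b < p ∧ a + c < d1 ∧ a + e < d4) ∨
      (b + a < p ∧ b + c < d3 ∧ b + e < d2) ∨
      (c + a < d1 ∧ c + b < d3 ∧ c + e < q) ∨
      (e + a < d4 ∧ e + b < d2 ∧ e + c < q) ∨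
      (a + c < d1 ∧ a + e < d4 ∧ b + c < d3 ∧ b + e < d2) := by
    by_cases hD1 : d1 ≤ 2 * M
    · have hd2big : 8 * M < d2 := by
        rcases le_or_gt d2 (8*M) with h | h
        · exact absurd (max_le (by linarith) h) (not_le.mpr h1)
        · exact h
      by_cases hP : p ≤ 2 * M
      · -- d3 ≤ 4M, so d4 > 8M; D holds
        have hd3 : d3 ≤ 4 * M := by linarith
        have hd4big : 8 * M < d4 := by
          rcases le_or_gt d4 (8*M) with h | h
          · exfalso; exact absurd (max_le (by linarith) h) (not_le.mpr h2)
          · exact h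
        refine Or.inr (Or.inr (Or.inr (Or.inl ⟨by linarith, by linarith, ?_⟩)))
        linarith
      · by_cases hD3 : d3 ≤ 2 * M
        · have hd4big : 8 * M < d4 := by
            rcases le_or_gt d4 (8*M) with h | h
            · exfalso; exact absurd (max_le (by linarith) h) (not_le.mpr h2)
            · exact h
          refine Or.inr (Or.inr (Or.inr (Or.inl ⟨by linarith, by linarith, by linarith⟩)))
        · refine Or.inr (Or.inl ⟨by linarith, by linarith, by linarith⟩)
    · push_neg at hD1
      by_cases hD2 : d2 ≤ 2 * M
      · have hd1big : 8 * M < d1 := by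
          rcases le_or_gt d1 (8*M) with h | h
          · exfalso; exact absurd (max_le h (by linarith)) (not_le.mpr h1)
          · exact h
        by_cases hP : p ≤ 2 * M
        · have hd4 : d4 ≤ 4 * M := by linarith
          have hd3big : 8 * M < d3 := by
            rcases le_or_gt d3 (8*M) with h | h
            · exfalso; exact absurd (max_le h (by linarith)) (not_le.mpr h2)
            · exact h
          refine Or.inr (Or.inr (Or.inl ⟨by linarith, by linarith, by linarith⟩))
        · push_neg at hP
          by_cases hD4 : d4 ≤ 2 * M
          · have hd3big : 8 * M < d3 := by
              rcases le_or_gt d3 (8*M) with h | h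
              · exfalso; exact absurd (max_le h (by linarith)) (not_le.mpr h2)
              · exact h
            refine Or.inr (Or.inr (Or.inl ⟨by linarith, by linarith, by linarith⟩))
          · push_neg at hD4
            exact Or.inl ⟨by linarith, by linarith, by linarith⟩
      · push_neg at hD2
        by_cases hD3 : d3 ≤ 2 * M
        · have hd4big : 8 * M < d4 := by
            rcases le_or_gt d4 (8*M) with h | h
            · exfalso; exact absurd (max_le (by linarith) h) (not_le.mpr h2)
            · exact h
          by_cases hP : p ≤ 2 * M
          · have hd1 : d1 ≤ 4 * M := by linarith
            have hd2big : 8 * M < d2 := by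
              rcases le_or_gt d2 (8*M) with h | h
              · exfalso; exact absurd (max_le (by linarith) h) (not_le.mpr h1)
              · exact h
            refine Or.inr (Or.inr (Or.inr (Or.inl ⟨by linarith, by linarith, by linarith⟩)))
          · push_neg at hP
            exact Or.inl ⟨by linarith, by linarith, by linarith⟩
        · push_neg at hD3
          by_cases hD4 : d4 ≤ 2 * M
          · have hd3big : 8 * M < d3 := by
              rcases le_or_gt d3 (8*M) with h | h
              · exfalso; exact absurd (max_le h (by linarith)) (not_le.mpr h2)
              · exact h
            by_cases hP : p ≤ 2 * M
            · have hd2le : d2 ≤ 4 * M := by linarith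
              have hd1big : 8 * M < d1 := by
                rcases le_or_gt d1 (8*M) with h | h
                · exfalso; exact absurd (max_le h (by linarith)) (not_le.mpr h1)
                · exact h
              refine Or.inr (Or.inr (Or.inl ⟨by linarith, by linarith, by linarith⟩))
            · push_neg at hP
              refine Or.inr (Or.inl ⟨by linarith, by linarith, by linarith⟩)
          · push_neg at hD4
            exact Or.inr (Or.inr (Or.inr (Or.inr ⟨by linarith, by linarith, by linarith, by linarith⟩)))
  rcases key with ⟨k1, k2, k3⟩ | ⟨k1, k2, k3⟩ | ⟨k1, k2, k3⟩ | ⟨k1, k2, k3⟩ | ⟨k1, k2, k3, k4⟩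
  · left
    rw [Set.inter_union_distrib_left, Set.inter_union_distrib_left,
      cube_disj k1, cube_disj k2, cube_disj k3]
    simp
  · right; left
    rw [Set.inter_union_distrib_left, Set.inter_union_distrib_left,
      cube_disj (by rwa [norm_sub_rev] : b + a < ‖u₂ - u₁‖),
      cube_disj k2, cube_disj k3]
    simp
  · right; right; left
    rw [Set.inter_union_distrib_left, Set.inter_union_distrib_left,
      cube_disj (by rwa [norm_sub_rev] : c + a < ‖u₁' - u₁‖),
      cube_disj (by rwa [norm_sub_rev] : c + b < ‖u₁' - u₂‖),
      cube_disj k3]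
    simp
  · right; right; right; left
    rw [Set.inter_union_distrib_left, Set.inter_union_distrib_left,
      cube_disj (by rwa [norm_sub_rev] : e + a < ‖u₂' - u₁‖),
      cube_disj (by rwa [norm_sub_rev] : e + b < ‖u₂' - u₂‖),
      cube_disj (by rwa [norm_sub_rev] : e + c < ‖u₂' - u₁'‖)]
    simp
  · right; right; right; right
    rw [Set.union_inter_distrib_right, Set.inter_union_distrib_left,
      Set.inter_union_distrib_left,
      cube_disj k1, cube_disj k2, cube_disj k3, cube_disj k4]
    simp
end
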